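/- arXiv:1912.02858 — 2 statements merged into one kernel-verified Lean document; each statement's English description precedes it below -/
import Mathlib

section
/- mixValue is subadditive under concatenation: if L₁, R₁ ⊆ (−∞, x] and L₂, R₂ ⊆ [x, +∞) are finite sets with L₁ ∪ L₂ disjoint from R₁ ∪ R₂, then mixValue(L₁ ∪ L₂, R₁ ∪ R₂) ≤ mixValue(L₁,R₁) + mixValue(L₂,R₂). -/
/-- Number of maximal blocks of equal symbols in a string over `{L,R}` (as `Bool`s). -/
def blocks : List Bool → ℕ
  | [] => 0
  | [_] => 1
  | a :: b :: l => (if a = b then 0 else 1) + blocks (b :: l)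

/-- The labeled merge of two finite sets of reals: sort `L ∪ R` increasingly and
label each element by whether it came from `L` (`true`) or not. -/
noncomputable def mix (L R : Finset ℝ) : List Bool :=
  ((L ∪ R).sort (· ≤ ·)).map (fun x => decide (x ∈ L))

/-- `mixValue L R` is the number of maximal same-origin blocks in the merged sorted sequence. -/
noncomputable def mixValue (L R : Finset ℝ) : ℕ := blocks (mix L R)


lemma blocks_le_cons (a : Bool) (l : List Bool) : blocks l ≤ blocks (a :: l) := by
  cases l with
  | nil => simp [blocks]
  | cons b t => show blocks (b :: t) ≤ _ + blocks (b :: t); omega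

lemma blocks_cons_le_cons_cons (a b : Bool) (l : List Bool) :
    blocks (a :: l) ≤ blocks (a :: b :: l) := by
  cases l with
  | nil =>
    show blocks [a] ≤ _ + blocks [b]
    simp [blocks]
  | cons c t =>
    show (if a = c then 0 else 1) + blocks (c :: t) ≤
      (if a = b then 0 else 1) + ((if b = c then 0 else 1) + blocks (c :: t))
    cases a <;> cases b <;> cases c <;> simp <;> omega

lemma blocks_sublist : ∀ {s t : List Bool}, s.Sublist t →
    blocks s ≤ blocks t ∧ ∀ a, blocks (a :: s) ≤ blocks (a :: t) := by
  intro s t h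
  induction h with
  | slnil => exact ⟨le_refl _, fun a => le_refl _⟩
  | cons b hst ih =>
    refine ⟨ih.1.trans (blocks_le_cons _ _), fun a => ?_⟩
    exact (ih.2 a).trans (blocks_cons_le_cons_cons a b _)
  | cons_cons b hst ih =>
    refine ⟨ih.2 b, fun a => ?_⟩
    show (if a = b then 0 else 1) + blocks (b :: _) ≤ (if a = b then 0 else 1) + blocks (b :: _)
    exact Nat.add_le_add_left (ih.2 b) _

lemma blocks_append_le : ∀ (s t : List Bool), blocks (s ++ t) ≤ blocks s + blocks t
  | [], t => by simp [blocks]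
  | [a], t => by
      cases t with
      | nil => simp [blocks]
      | cons c t' =>
        show (if a = c then 0 else 1) + blocks (c :: t') ≤ blocks [a] + blocks (c :: t')
        have : blocks [a] = 1 := rfl
        split <;> omega
  | a :: b :: s, t => by
      show (if a = b then 0 else 1) + blocks ((b :: s) ++ t) ≤
        ((if a = b then 0 else 1) + blocks (b :: s)) + blocks t
      have := blocks_append_le (b :: s) t
      omega

lemma sort_union_of_disjoint {s t : Finset ℝ} (hd : Disjoint s t)
    (hle : ∀ a ∈ s, ∀ b ∈ t, a ≤ b) :
    (s ∪ t).sort (· ≤ ·) = s.sort (· ≤ ·) ++ t.sort (· ≤ ·) := by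
  refine (fun hp h1 h2 => List.Perm.eq_of_pairwise' (r := (· ≤ ·)) h1 h2 hp) ?_ ?_ ?_
  · rw [← Multiset.coe_eq_coe, ← Multiset.coe_add, Finset.sort_eq, Finset.sort_eq,
      Finset.sort_eq, ← Finset.disjUnion_eq_union s t hd]
    rfl
  · exact Finset.pairwise_sort _ _
  · rw [List.pairwise_append]
    exact ⟨Finset.pairwise_sort _ _, Finset.pairwise_sort _ _,
      fun a ha b hb => hle a (Finset.mem_sort _ |>.mp ha) b (Finset.mem_sort _ |>.mp hb)⟩

lemma sort_sublist_of_subset {s t : Finset ℝ} (hst : s ⊆ t) :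
    (s.sort (· ≤ ·)).Sublist (t.sort (· ≤ ·)) := by
  apply List.sublist_of_subperm_of_pairwise _ (Finset.pairwise_sort _ _) (Finset.pairwise_sort _ _)
  rw [← Multiset.coe_le]
  push_cast [Finset.sort_eq]
  exact Finset.val_le_iff.mpr hst

theorem mixValue_subadditive (x : ℝ) (L₁ R₁ L₂ R₂ : Finset ℝ)
    (hL₁ : ∀ a ∈ L₁, a ≤ x) (hR₁ : ∀ a ∈ R₁, a ≤ x)
    (hL₂ : ∀ a ∈ L₂, x ≤ a) (hR₂ : ∀ a ∈ R₂, x ≤ a)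
    (h : Disjoint (L₁ ∪ L₂) (R₁ ∪ R₂)) :
    mixValue (L₁ ∪ L₂) (R₁ ∪ R₂) ≤ mixValue L₁ R₁ + mixValue L₂ R₂ := by
  classical
  set A := L₁ ∪ R₁ with hA
  set B := L₂ ∪ R₂ with hB
  have hAB : (L₁ ∪ L₂) ∪ (R₁ ∪ R₂) = A ∪ B := by
    ext y; simp [hA, hB]; tauto
  have hAle : ∀ a ∈ A, a ≤ x := by
    intro a ha; rcases Finset.mem_union.mp ha with h' | h'
    exacts [hL₁ a h', hR₁ a h']
  have hBle : ∀ b ∈ B, x ≤ b := by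
    intro b hb; rcases Finset.mem_union.mp hb with h' | h'
    exacts [hL₂ b h', hR₂ b h']
  -- label agreement
  have lab1 : ∀ y ∈ A, (decide (y ∈ L₁ ∪ L₂) = decide (y ∈ L₁)) := by
    intro y hy
    rcases Finset.mem_union.mp hy with h' | h'
    · simp [Finset.mem_union, h']
    · have : y ∉ L₂ := fun hy2 =>
        (Finset.disjoint_left.mp h (Finset.mem_union_right _ hy2))
          (Finset.mem_union_left _ h')
      have hy1 : y ∉ L₁ := fun hy1 =>
        (Finset.disjoint_left.mp h (Finset.mem_union_left _ hy1))
          (Finset.mem_union_left _ h')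
      simp [Finset.mem_union, hy1, this]
  have lab2 : ∀ y ∈ B, (decide (y ∈ L₁ ∪ L₂) = decide (y ∈ L₂)) := by
    intro y hy
    rcases Finset.mem_union.mp hy with h' | h'
    · simp [Finset.mem_union, h']
    · have : y ∉ L₁ := fun hy1 =>
        (Finset.disjoint_left.mp h (Finset.mem_union_left _ hy1))
          (Finset.mem_union_right _ h')
      have hy2 : y ∉ L₂ := fun hy2 =>
        (Finset.disjoint_left.mp h (Finset.mem_union_right _ hy2))
          (Finset.mem_union_right _ h')
      simp [Finset.mem_union, hy2, this]
  have key : ∀ (B' : Finset ℝ), B' ⊆ B → Disjoint A B' → A ∪ B = A ∪ B' →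
      mixValue (L₁ ∪ L₂) (R₁ ∪ R₂) ≤ mixValue L₁ R₁ + mixValue L₂ R₂ := by
    intro B' hB'B hdisj hunion
    have hsort : (A ∪ B).sort (· ≤ ·) = A.sort (· ≤ ·) ++ B'.sort (· ≤ ·) := by
      rw [hunion]
      exact sort_union_of_disjoint hdisj
        (fun a ha b hb => (hAle a ha).trans (hBle b (hB'B hb)))
    unfold mixValue mix
    rw [hAB, hsort, List.map_append]
    refine (blocks_append_le _ _).trans (Nat.add_le_add ?_ ?_)
    · have : ((A.sort (· ≤ ·)).map (fun y => decide (y ∈ L₁ ∪ L₂)))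
          = ((A.sort (· ≤ ·)).map (fun y => decide (y ∈ L₁))) :=
        List.map_congr_left (fun y hy => lab1 y ((Finset.mem_sort _).mp hy))
      rw [this]
    · have h1 : ((B'.sort (· ≤ ·)).map (fun y => decide (y ∈ L₁ ∪ L₂)))
          = ((B'.sort (· ≤ ·)).map (fun y => decide (y ∈ L₂))) :=
        List.map_congr_left (fun y hy => lab2 y (hB'B ((Finset.mem_sort _).mp hy)))
      rw [h1]
      exact (blocks_sublist ((sort_sublist_of_subset hB'B).map _)).1
  by_cases hd : Disjoint A B
  · exact key B (le_refl _) hd rfl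
  · obtain ⟨y, hyA, hyB⟩ := Finset.not_disjoint_iff.mp hd
    have hyx : y = x := le_antisymm (hAle y hyA) (hBle y hyB)
    subst hyx
    refine key (B.erase y) (Finset.erase_subset _ _) ?_ ?_
    · rw [Finset.disjoint_right]
      intro z hz hzA
      have hz' := Finset.mem_erase.mp hz
      exact hz'.1 (le_antisymm (hAle z hzA) (hBle z hz'.2))
    · ext z
      simp only [Finset.mem_union, Finset.mem_erase]
      constructor
      · rintro (h' | h')
        · exact Or.inl h'
        · by_cases hzy : z = y
          · exact Or.inl (hzy ▸ hyA)
          · exact Or.inr ⟨hzy, h'⟩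
      · rintro (h' | h')
        · exact Or.inl h'
        · exact Or.inr h'.2
end

section
/- Funnel is superadditive under interleaving of disjoint key ranges: let P be a finite point set with distinct y-coordinates, and suppose P = P_L ∪ P_R where every point of P_L has strictly smaller x-coordinate than every point of P_R. Then Funnel(P) ≥ Funnel(P_L) + Funnel(P_R). -/
/-- Membership in the minimal axis-aligned rectangle spanned by `p` and `q`. -/
def inRect (p q t : ℝ × ℝ) : Prop :=
  min p.1 q.1 ≤ t.1 ∧ t.1 ≤ max p.1 q.1 ∧ min p.2 q.2 ≤ t.2 ∧ t.2 ≤ max p.2 q.2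

noncomputable instance (p q t : ℝ × ℝ) : Decidable (inRect p q t) := by
  unfold inRect; infer_instance

/-- The left funnel of `p` within `P`. -/
noncomputable def FL (P : Finset (ℝ × ℝ)) (p : ℝ × ℝ) : Finset (ℝ × ℝ) :=
  P.filter (fun q => q.2 < p.2 ∧ q.1 < p.1 ∧ ∀ t ∈ P, inRect p q t → t = p ∨ t = q)

/-- The right funnel of `p` within `P`. -/
noncomputable def FR (P : Finset (ℝ × ℝ)) (p : ℝ × ℝ) : Finset (ℝ × ℝ) :=
  P.filter (fun q => q.2 < p.2 ∧ q.1 > p.1 ∧ ∀ t ∈ P, inRect p q t → t = p ∨ t = q)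

/-- The funnel contribution `f(P,p)`. -/
noncomputable def fContrib (P : Finset (ℝ × ℝ)) (p : ℝ × ℝ) : ℕ :=
  mixValue ((FL P p).image Prod.snd) ((FR P p).image Prod.snd)

/-- Wilber's Funnel bound. -/
noncomputable def Funnel (P : Finset (ℝ × ℝ)) : ℕ := ∑ p ∈ P, fContrib P p

/-- All points of `P` have distinct `y`-coordinates. -/
def DistinctY (P : Finset (ℝ × ℝ)) : Prop :=
  ∀ p ∈ P, ∀ q ∈ P, p.2 = q.2 → p = q

/-- All points of `P` have distinct `x`-coordinates. -/
def DistinctX (P : Finset (ℝ × ℝ)) : Prop :=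
  ∀ p ∈ P, ∀ q ∈ P, p.1 = q.1 → p = q

lemma blocks_pos (a : Bool) (l : List Bool) : 1 ≤ blocks (a :: l) := by
  induction l generalizing a with
  | nil => simp [blocks]
  | cons b t ih =>
    have := ih b
    simp only [blocks]
    split <;> omega

lemma blocks_cons_le_cons (a b : Bool) (l : List Bool) :
    blocks (a :: l) ≤ 1 + blocks (b :: l) := by
  cases l with
  | nil => simp [blocks]
  | cons c t =>
    simp only [blocks]
    split <;> split <;> omega

lemma blocks_cons_sublist {l₁ l₂ : List Bool} (h : l₁.Sublist l₂) :
    ∀ a, blocks (a :: l₁) ≤ blocks (a :: l₂) := by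
  induction h with
  | slnil => intro a; exact le_rfl
  | @cons l₁ l₂ b h ih =>
    intro a
    by_cases hab : a = b
    · subst hab
      calc blocks (a :: l₁) ≤ blocks (a :: l₂) := ih a
        _ ≤ blocks (a :: a :: l₂) := by simp [blocks]
    · calc blocks (a :: l₁) ≤ 1 + blocks (b :: l₁) := blocks_cons_le_cons a b l₁
        _ ≤ 1 + blocks (b :: l₂) := Nat.add_le_add_left (ih b) 1
        _ = blocks (a :: b :: l₂) := by simp [blocks, hab]
  | @cons_cons l₁ l₂ b h ih =>
    intro a
    simp only [blocks]
    exact Nat.add_le_add_left (ih b) _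

lemma blocks_sublist_s9 {l₁ l₂ : List Bool} (h : l₁.Sublist l₂) :
    blocks l₁ ≤ blocks l₂ := by
  induction h with
  | slnil => exact le_rfl
  | @cons l₁ l₂ b h ih => exact le_trans ih (blocks_le_cons b l₂)
  | @cons_cons l₁ l₂ b h ih => exact blocks_cons_sublist h b

lemma mixValue_mono {A A' B B' : Finset ℝ} (hA : A ⊆ A') (hB : B ⊆ B')
    (hd : ∀ x ∈ B, x ∉ A') : mixValue A B ≤ mixValue A' B' := by
  unfold mixValue
  apply blocks_sublist_s9
  have hsub : ((A ∪ B).sort (· ≤ ·)).Sublist ((A' ∪ B').sort (· ≤ ·)) := by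
    apply List.sublist_of_subperm_of_pairwise (r := (· ≤ ·))
    · apply List.subperm_of_subset (Finset.sort_nodup _ _)
      intro x hx
      rw [Finset.mem_sort] at hx ⊢
      exact Finset.union_subset_union hA hB hx
    · exact Finset.pairwise_sort _ _
    · exact Finset.pairwise_sort _ _
  have hmap : mix A B = ((A ∪ B).sort (· ≤ ·)).map (fun x => decide (x ∈ A')) := by
    unfold mix
    apply List.map_congr_left
    intro x hx
    rw [Finset.mem_sort, Finset.mem_union] at hx
    rcases hx with h | h
    · simp [h, hA h]
    · have h1 : x ∉ A' := hd x h
      have h2 : x ∉ A := fun hc => h1 (hA hc)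
      simp [h1, h2]
  rw [hmap]
  exact hsub.map _

lemma fContrib_le {P Q : Finset (ℝ × ℝ)} (p : ℝ × ℝ) (hQ : Q ⊆ P) (hY : DistinctY P)
    (hFL : FL Q p ⊆ FL P p) (hFR : FR Q p ⊆ FR P p) :
    fContrib Q p ≤ fContrib P p := by
  unfold fContrib
  apply mixValue_mono (Finset.image_subset_image hFL) (Finset.image_subset_image hFR)
  intro y hy hy'
  simp only [Finset.mem_image] at hy hy'
  obtain ⟨q, hq, rfl⟩ := hy
  obtain ⟨r, hr, hry⟩ := hy'
  have hqP : q ∈ P := hQ ((Finset.filter_subset _ _) hq)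
  have hrP : r ∈ P := (Finset.filter_subset _ _) hr
  have hrq : r = q := hY r hrP q hqP hry
  rw [FR, Finset.mem_filter] at hq
  rw [FL, Finset.mem_filter] at hr
  rw [hrq] at hr
  exact lt_asymm hq.2.2.1 hr.2.2.1

lemma FL_left_subset {P PL PR : Finset (ℝ × ℝ)} (hunion : P = PL ∪ PR)
    (hx : ∀ pl ∈ PL, ∀ pr ∈ PR, pl.1 < pr.1) {p : ℝ × ℝ} (hp : p ∈ PL) :
    FL PL p ⊆ FL P p := by
  intro q hq
  rw [FL, Finset.mem_filter] at hq ⊢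
  obtain ⟨hqPL, h1, h2, h3⟩ := hq
  refine ⟨by rw [hunion]; exact Finset.mem_union_left _ hqPL, h1, h2, ?_⟩
  intro t ht hrect
  rw [hunion, Finset.mem_union] at ht
  rcases ht with ht | ht
  · exact h3 t ht hrect
  · exfalso
    have h4 := hrect.2.1
    have h5 := hx p hp t ht
    have h6 := hx q hqPL t ht
    have : max p.1 q.1 < t.1 := max_lt h5 h6
    linarith

lemma FR_left_subset {P PL PR : Finset (ℝ × ℝ)} (hunion : P = PL ∪ PR)
    (hx : ∀ pl ∈ PL, ∀ pr ∈ PR, pl.1 < pr.1) {p : ℝ × ℝ} (hp : p ∈ PL) :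
    FR PL p ⊆ FR P p := by
  intro q hq
  rw [FR, Finset.mem_filter] at hq ⊢
  obtain ⟨hqPL, h1, h2, h3⟩ := hq
  refine ⟨by rw [hunion]; exact Finset.mem_union_left _ hqPL, h1, h2, ?_⟩
  intro t ht hrect
  rw [hunion, Finset.mem_union] at ht
  rcases ht with ht | ht
  · exact h3 t ht hrect
  · exfalso
    have h4 := hrect.2.1
    have h5 := hx p hp t ht
    have h6 := hx q hqPL t ht
    have : max p.1 q.1 < t.1 := max_lt h5 h6
    linarith

lemma FL_right_subset {P PL PR : Finset (ℝ × ℝ)} (hunion : P = PL ∪ PR)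
    (hx : ∀ pl ∈ PL, ∀ pr ∈ PR, pl.1 < pr.1) {p : ℝ × ℝ} (hp : p ∈ PR) :
    FL PR p ⊆ FL P p := by
  intro q hq
  rw [FL, Finset.mem_filter] at hq ⊢
  obtain ⟨hqPR, h1, h2, h3⟩ := hq
  refine ⟨by rw [hunion]; exact Finset.mem_union_right _ hqPR, h1, h2, ?_⟩
  intro t ht hrect
  rw [hunion, Finset.mem_union] at ht
  rcases ht with ht | ht
  · exfalso
    have h4 := hrect.1
    have h5 := hx t ht p hp
    have h6 := hx t ht q hqPR
    have : t.1 < min p.1 q.1 := lt_min h5 h6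
    linarith
  · exact h3 t ht hrect

lemma FR_right_subset {P PL PR : Finset (ℝ × ℝ)} (hunion : P = PL ∪ PR)
    (hx : ∀ pl ∈ PL, ∀ pr ∈ PR, pl.1 < pr.1) {p : ℝ × ℝ} (hp : p ∈ PR) :
    FR PR p ⊆ FR P p := by
  intro q hq
  rw [FR, Finset.mem_filter] at hq ⊢
  obtain ⟨hqPR, h1, h2, h3⟩ := hq
  refine ⟨by rw [hunion]; exact Finset.mem_union_right _ hqPR, h1, h2, ?_⟩
  intro t ht hrect
  rw [hunion, Finset.mem_union] at ht
  rcases ht with ht | ht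
  · exfalso
    have h4 := hrect.1
    have h5 := hx t ht p hp
    have h6 := hx t ht q hqPR
    have : t.1 < min p.1 q.1 := lt_min h5 h6
    linarith
  · exact h3 t ht hrect

theorem funnel_superadditive_interleave (P PL PR : Finset (ℝ × ℝ))
    (hunion : P = PL ∪ PR)
    (hx : ∀ pl ∈ PL, ∀ pr ∈ PR, pl.1 < pr.1)
    (hY : DistinctY P) :
    Funnel P ≥ Funnel PL + Funnel PR := by
  have hdisj : Disjoint PL PR := by
    rw [Finset.disjoint_left]
    intro a haL haR
    exact lt_irrefl a.1 (hx a haL a haR)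
  have hPL : PL ⊆ P := hunion ▸ Finset.subset_union_left
  have hPR : PR ⊆ P := hunion ▸ Finset.subset_union_right
  have key : Funnel P = ∑ p ∈ PL, fContrib P p + ∑ p ∈ PR, fContrib P p := by
    rw [Funnel, hunion, Finset.sum_union hdisj]
  rw [key, Funnel, Funnel, ge_iff_le]
  apply Nat.add_le_add
  · apply Finset.sum_le_sum
    intro p hp
    exact fContrib_le p hPL hY (FL_left_subset hunion hx hp) (FR_left_subset hunion hx hp)
  · apply Finset.sum_le_sum
    intro p hp
    exact fContrib_le p hPR hY (FL_right_subset hunion hx hp) (FR_right_subset hunion hx hp)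
end
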